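/- There do not exist five distinct vertices a, b, c, d, e ∈ V such that φ(be) = φ(cd), φ(ab) = φ(de), and φ(bc) = φ(ae), where φ is the Modified CFLS coloring. -/
import Mathlib


namespace CFLS

/-- A vertex of `K_n` for `n = 2^(m^2)`: `m` blocks, each a string of `m` bits.
`x k` is the `k`-th block `x^(k+1)`, and `x k j` is its `j`-th bit (most significant first). -/
abbrev Vtx (m : ℕ) := Fin m → Fin m → Bool

/-- The `j`-th bit of a bit string (as a total function of `j : ℕ`). -/
def bitAt {N : ℕ} (f : Fin N → Bool) (j : ℕ) : Bool :=
  if h : j < N then f ⟨j, h⟩ else false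

/-- The value of a bit string read as a binary integer, most significant bit first. -/
def strToNat {N : ℕ} (f : Fin N → Bool) : ℕ :=
  ∑ j : Fin N, if f j then 2 ^ (N - 1 - j.val) else 0

/-- The `k`-th block of a vertex (as a total function of `k : ℕ`). -/
def blockAt {m : ℕ} (x : Vtx m) (k : ℕ) : Fin m → Bool :=
  if h : k < m then x ⟨k, h⟩ else fun _ => false

/-- The least block index at which `x` and `y` differ. -/
noncomputable def firstDiffBlock {m : ℕ} (x y : Vtx m) : ℕ :=
  sInf {k | blockAt x k ≠ blockAt y k}

/-- The position (1-indexed) of the first bit at which two bit strings differ; `0` if equal. -/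
noncomputable def firstDiffIdx {N : ℕ} (f g : Fin N → Bool) : ℕ :=
  if f = g then 0 else sInf {j | bitAt f j ≠ bitAt g j} + 1

/-- The value of a vertex read as a binary integer (concatenation of its blocks). -/
def vtxToNat {m : ℕ} (x : Vtx m) : ℕ :=
  ∑ k : Fin m, strToNat (x k) * (2 ^ m) ^ (m - 1 - k.val)

/-- The colors of the Modified CFLS coloring:
`((i, {x^(i), y^(i)}), i_1, …, i_m, δ_1, …, δ_m)`. -/
abbrev Color (m : ℕ) := (ℕ × Set (Fin m → Bool)) × (Fin m → ℕ) × (Fin m → ℤ)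

/-- The Modified CFLS color of the edge `xy` assuming `x ≤ y` as binary integers. -/
noncomputable def phiAux {m : ℕ} (x y : Vtx m) : Color m :=
  ((firstDiffBlock x y,
      {blockAt x (firstDiffBlock x y), blockAt y (firstDiffBlock x y)}),
   fun k => firstDiffIdx (x k) (y k),
   fun k => if strToNat (x k) ≤ strToNat (y k) then (1 : ℤ) else -1)

/-- The Modified CFLS coloring `φ`. -/
noncomputable def phi {m : ℕ} (x y : Vtx m) : Color m :=
  if vtxToNat x ≤ vtxToNat y then phiAux x y else phiAux y x

/-- The ten edges among five vertices. -/
def edgeList {m : ℕ} (a b c d e : Vtx m) : List (Vtx m × Vtx m) :=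
  [(a,b),(a,c),(a,d),(a,e),(b,c),(b,d),(b,e),(c,d),(c,e),(d,e)]

/-- The number of the ten edges among `a,b,c,d,e` receiving color `col` under `φ`. -/
noncomputable def colorCount {m : ℕ} (a b c d e : Vtx m) (col : Color m) : ℕ :=
  ((edgeList a b c d e).map fun p => phi p.1 p.2).countP fun x =>
    @decide (x = col) (Classical.propDecidable _)

/-- Five pairwise distinct vertices. -/
def Distinct5 {m : ℕ} (a b c d e : Vtx m) : Prop :=
  a ≠ b ∧ a ≠ c ∧ a ≠ d ∧ a ≠ e ∧ b ≠ c ∧ b ≠ d ∧ b ≠ e ∧ c ≠ d ∧ c ≠ e ∧ d ≠ e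

/-- `col` appears on some edge among `a,b,c,d,e`. -/
noncomputable def IsAttained {m : ℕ} (a b c d e : Vtx m) (col : Color m) : Prop :=
  colorCount a b c d e col ≠ 0

/-- A 2-2-2-2-2 configuration: five distinct vertices such that `φ` on the ten edges
among them takes exactly five values, each attained on exactly two edges. -/
def IsConfig22222 {m : ℕ} (a b c d e : Vtx m) : Prop :=
  Distinct5 a b c d e ∧
  ∀ col : Color m, colorCount a b c d e col = 0 ∨ colorCount a b c d e col = 2

/-- The color class of `col` is a matching: two vertex-disjoint edges of color `col`. -/
def IsMatchingClass {m : ℕ} (a b c d e : Vtx m) (col : Color m) : Prop :=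
  ∃ p ∈ edgeList a b c d e, ∃ q ∈ edgeList a b c d e,
    phi p.1 p.2 = col ∧ phi q.1 q.2 = col ∧
    p.1 ≠ q.1 ∧ p.1 ≠ q.2 ∧ p.2 ≠ q.1 ∧ p.2 ≠ q.2

/-- The color class of `col` is a path: two distinct edges of color `col` sharing a vertex. -/
def IsPathClass {m : ℕ} (a b c d e : Vtx m) (col : Color m) : Prop :=
  ∃ p ∈ edgeList a b c d e, ∃ q ∈ edgeList a b c d e,
    p ≠ q ∧ phi p.1 p.2 = col ∧ phi q.1 q.2 = col ∧
    (p.1 = q.1 ∨ p.1 = q.2 ∨ p.2 = q.1 ∨ p.2 = q.2)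



section Aux

lemma fdi_comm {N : ℕ} (f g : Fin N → Bool) : firstDiffIdx f g = firstDiffIdx g f := by
  unfold firstDiffIdx
  rcases eq_or_ne f g with h | h
  · rw [if_pos h, if_pos h.symm]
  · rw [if_neg h, if_neg h.symm]
    congr 2
    ext j
    exact ne_comm

lemma fdb_comm {m : ℕ} (x y : Vtx m) : firstDiffBlock x y = firstDiffBlock y x := by
  unfold firstDiffBlock
  congr 1
  ext k
  exact ne_comm

lemma fdi_self {N : ℕ} (f : Fin N → Bool) : firstDiffIdx f f = 0 := by
  unfold firstDiffIdx; rw [if_pos rfl]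

lemma fdi_eq_zero {N : ℕ} {f g : Fin N → Bool} (h : firstDiffIdx f g = 0) : f = g := by
  by_contra hne
  unfold firstDiffIdx at h
  rw [if_neg hne] at h
  omega

lemma fdi_spec {N : ℕ} {f g : Fin N → Bool} (h : f ≠ g) :
    firstDiffIdx f g = sInf {j | bitAt f j ≠ bitAt g j} + 1 := by
  unfold firstDiffIdx; rw [if_neg h]

lemma bit_diffSet_nonempty {N : ℕ} {f g : Fin N → Bool} (h : f ≠ g) :
    {j | bitAt f j ≠ bitAt g j}.Nonempty := by
  rcases Function.ne_iff.mp h with ⟨j, hj⟩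
  exact ⟨j.val, by simp [bitAt, j.isLt, Fin.eta, hj]⟩

lemma bit_diff_at_sInf {N : ℕ} {f g : Fin N → Bool} (h : f ≠ g) :
    bitAt f (sInf {j | bitAt f j ≠ bitAt g j}) ≠ bitAt g (sInf {j | bitAt f j ≠ bitAt g j}) :=
  Nat.sInf_mem (bit_diffSet_nonempty h)

/-- The key combinatorial fact about bit strings underlying the candy-corn argument. -/
lemma bit_lemma {N : ℕ} {A B C D E : Fin N → Bool}
    (hBE : B ≠ E) (hCD : C ≠ D)
    (hset : ({B, E} : Set (Fin N → Bool)) = {C, D})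
    (h2 : firstDiffIdx A B = firstDiffIdx D E)
    (h3 : firstDiffIdx B C = firstDiffIdx A E) : False := by
  have hB : B = C ∨ B = D := by
    have : B ∈ ({C, D} : Set (Fin N → Bool)) := hset ▸ Set.mem_insert _ _
    simpa using this
  have hE : E = C ∨ E = D := by
    have : E ∈ ({C, D} : Set (Fin N → Bool)) := by
      rw [← hset]; exact Set.mem_insert_of_mem _ rfl
    simpa using this
  rcases hB with hB | hB
  · -- pairing B = C, E = D
    have hED : E = D := by
      rcases hE with hE | hE
      · exact absurd (hB.trans hE.symm) hBE
      · exact hE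
    have hAE : A = E := fdi_eq_zero (by rw [← h3, hB, fdi_self])
    have hAB : A = B := fdi_eq_zero (by rw [h2, ← hED, fdi_self])
    exact hBE (hAB.symm.trans hAE)
  · -- pairing B = D, E = C
    have hEC : E = C := by
      rcases hE with hE | hE
      · exact hE
      · exact absurd (hB.trans hE.symm) hBE
    rw [← hB] at h2
    rw [← hEC] at h3
    -- h2 : firstDiffIdx A B = firstDiffIdx B E, h3 : firstDiffIdx B E = firstDiffIdx A E
    have hAB : A ≠ B := by
      intro h
      exact hBE (fdi_eq_zero (by rw [← h2, h, fdi_self]))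
    have hAE : A ≠ E := by
      intro h
      exact hBE (fdi_eq_zero (by rw [h3, h, fdi_self]))
    rw [fdi_spec hAB, fdi_spec hBE] at h2
    rw [fdi_spec hBE, fdi_spec hAE] at h3
    have e2 : sInf {j | bitAt A j ≠ bitAt B j} = sInf {j | bitAt B j ≠ bitAt E j} := by omega
    have e3 : sInf {j | bitAt A j ≠ bitAt E j} = sInf {j | bitAt B j ≠ bitAt E j} := by omega
    have m1 := bit_diff_at_sInf hAB
    have m2 := bit_diff_at_sInf hAE
    have m3 := bit_diff_at_sInf hBE
    rw [e2] at m1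
    rw [e3] at m2
    set j := sInf {j | bitAt B j ≠ bitAt E j} with hj
    revert m1 m2 m3
    cases bitAt A j <;> cases bitAt B j <;> cases bitAt E j <;> simp

lemma phi_fdb {m : ℕ} (x y : Vtx m) : (phi x y).1.1 = firstDiffBlock x y := by
  unfold phi phiAux
  split
  · rfl
  · exact fdb_comm y x

lemma phi_set {m : ℕ} (x y : Vtx m) :
    (phi x y).1.2 = {blockAt x (firstDiffBlock x y), blockAt y (firstDiffBlock x y)} := by
  unfold phi phiAux
  split
  · rfl
  · rw [fdb_comm y x]
    exact Set.pair_comm _ _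

lemma phi_idx {m : ℕ} (x y : Vtx m) (k : Fin m) :
    (phi x y).2.1 k = firstDiffIdx (x k) (y k) := by
  unfold phi phiAux
  split
  · rfl
  · exact fdi_comm (y k) (x k)

lemma block_diffSet_nonempty {m : ℕ} {x y : Vtx m} (h : x ≠ y) :
    {k | blockAt x k ≠ blockAt y k}.Nonempty := by
  rcases Function.ne_iff.mp h with ⟨k, hk⟩
  exact ⟨k.val, by simp [blockAt, k.isLt, Fin.eta, hk]⟩

lemma block_diff_at_fdb {m : ℕ} {x y : Vtx m} (h : x ≠ y) :
    blockAt x (firstDiffBlock x y) ≠ blockAt y (firstDiffBlock x y) :=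
  Nat.sInf_mem (block_diffSet_nonempty h)

lemma fdb_lt {m : ℕ} {x y : Vtx m} (h : x ≠ y) : firstDiffBlock x y < m := by
  by_contra hge
  apply block_diff_at_fdb h
  unfold blockAt
  rw [dif_neg hge, dif_neg hge]

lemma blockAt_lt {m : ℕ} (x : Vtx m) {k : ℕ} (h : k < m) :
    blockAt x k = x ⟨k, h⟩ := by
  unfold blockAt
  rw [dif_pos h]

end Aux

/-- The configuration of Figure (A) is forbidden under the Modified CFLS coloring. -/
theorem no_candy_corn (m : ℕ) (hm : 0 < m) :
    ¬ ∃ a b c d e : Vtx m, Distinct5 a b c d e ∧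
      phi b e = phi c d ∧ phi a b = phi d e ∧ phi b c = phi a e := by
  rintro ⟨a, b, c, d, e, hd, h1, h2, h3⟩
  have hbe : b ≠ e := hd.2.2.2.2.2.2.1
  have hcd : c ≠ d := hd.2.2.2.2.2.2.2.1
  set p : ℕ := firstDiffBlock b e with hp
  have hpcd : firstDiffBlock c d = p := by
    have := congrArg (fun col => col.1.1) h1
    simpa [phi_fdb] using this.symm
  have hplt : p < m := fdb_lt hbe
  set P : Fin m := ⟨p, hplt⟩ with hP
  have hBE : b P ≠ e P := by
    have := block_diff_at_fdb hbe
    rwa [blockAt_lt b hplt, blockAt_lt e hplt] at this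
  have hCD : c P ≠ d P := by
    have := block_diff_at_fdb hcd
    rwa [hpcd, blockAt_lt c hplt, blockAt_lt d hplt] at this
  have hset : ({b P, e P} : Set (Fin m → Bool)) = {c P, d P} := by
    have := congrArg (fun col => col.1.2) h1
    simp only [phi_set, hpcd] at this
    rwa [blockAt_lt b hplt, blockAt_lt e hplt, blockAt_lt c hplt, blockAt_lt d hplt] at this
  have hI2 : firstDiffIdx (a P) (b P) = firstDiffIdx (d P) (e P) := by
    have := congrArg (fun col => col.2.1 P) h2
    simpa [phi_idx] using this
  have hI3 : firstDiffIdx (b P) (c P) = firstDiffIdx (a P) (e P) := by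
    have := congrArg (fun col => col.2.1 P) h3
    simpa [phi_idx] using this
  exact bit_lemma hBE hCD hset hI2 hI3

end CFLS
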